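/- Let k be a positive integer and let (a_j)_{j≥1} be the unique sequence of rationals with exp(−Σ_{j≥1} a_j x^{j+1} d/dx) · x = ((1+x)^k − 1)/k in ℚ[[x]]. Then a_1 = (1−k)/2 and a_2 = (k²−1)/12. -/

import Mathlib

noncomputable section

open PowerSeries

/-- Formal derivative `d/dx` on `ℚ[[x]]`, coefficientwise. -/
def pderiv (f : PowerSeries ℚ) : PowerSeries ℚ :=
  PowerSeries.mk fun n => (n + 1 : ℚ) * PowerSeries.coeff (R := ℚ) (n + 1) f

/-- The power series `Σ_{j≥1} a_j x^{j+1}`, where `a i` encodes the coefficient `a_{i+1}`. -/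
def coefSeries (a : ℕ → ℚ) : PowerSeries ℚ :=
  PowerSeries.mk fun n => if 2 ≤ n then a (n - 2) else 0

/-- The derivation `D = Σ_{j≥1} a_j x^{j+1} d/dx` acting on `ℚ[[x]]`. -/
def Dop (a : ℕ → ℚ) (f : PowerSeries ℚ) : PowerSeries ℚ :=
  coefSeries a * pderiv f

/-- `exp(−Σ_{j≥1} a_j x^{j+1} d/dx) · x = Σ_{m≥0} (−D)^m(x)/m!`.
Since each `x^{j+1} d/dx` strictly increases the order of a series with zero constant
term, `D^m(x)` has order `≥ m + 1`, so the coefficient of `x^n` only receives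
contributions from `m ≤ n`; the truncated sum below is therefore the honest
`(x)`-adically convergent sum. -/
def expNegD (a : ℕ → ℚ) : PowerSeries ℚ :=
  PowerSeries.mk fun n =>
    ∑ m ∈ Finset.range (n + 1),
      ((-1 : ℚ) ^ m / m.factorial) * PowerSeries.coeff (R := ℚ) n ((Dop a)^[m] PowerSeries.X)


lemma coeff_Dop (a : ℕ → ℚ) (f : PowerSeries ℚ) (n : ℕ) :
    PowerSeries.coeff (R := ℚ) n (Dop a f) =
    ∑ p ∈ Finset.range (n+1), (if 2 ≤ p then a (p - 2) else 0) *
      ((n - p + 1 : ℕ) * PowerSeries.coeff (R := ℚ) (n - p + 1) f) := by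
  simp only [Dop, pderiv, coefSeries, PowerSeries.coeff_mul,
    Finset.Nat.sum_antidiagonal_eq_sum_range_succ_mk, PowerSeries.coeff_mk]
  push_cast
  rfl

lemma c1 (a : ℕ → ℚ) : PowerSeries.coeff (R := ℚ) 1 (Dop a PowerSeries.X) = 0 := by
  rw [coeff_Dop]; simp [Finset.sum_range_succ, PowerSeries.coeff_X]
lemma c2 (a : ℕ → ℚ) : PowerSeries.coeff (R := ℚ) 2 (Dop a PowerSeries.X) = a 0 := by
  rw [coeff_Dop]; simp [Finset.sum_range_succ, PowerSeries.coeff_X]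
lemma c3 (a : ℕ → ℚ) : PowerSeries.coeff (R := ℚ) 3 (Dop a PowerSeries.X) = a 1 := by
  rw [coeff_Dop]; simp [Finset.sum_range_succ, PowerSeries.coeff_X]
lemma d1 (a : ℕ → ℚ) : PowerSeries.coeff (R := ℚ) 1 (Dop a (Dop a PowerSeries.X)) = 0 := by
  rw [coeff_Dop]; simp [Finset.sum_range_succ]
lemma d2 (a : ℕ → ℚ) : PowerSeries.coeff (R := ℚ) 2 (Dop a (Dop a PowerSeries.X)) = 0 := by
  rw [coeff_Dop]; simp [Finset.sum_range_succ, c1]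
lemma d3 (a : ℕ → ℚ) : PowerSeries.coeff (R := ℚ) 3 (Dop a (Dop a PowerSeries.X)) = 2 * a 0 ^ 2 := by
  rw [coeff_Dop]; simp [Finset.sum_range_succ, c1, c2]; ring
lemma e3 (a : ℕ → ℚ) : PowerSeries.coeff (R := ℚ) 3 (Dop a (Dop a (Dop a PowerSeries.X))) = 0 := by
  rw [coeff_Dop]; simp [Finset.sum_range_succ, d1, d2]

lemma exp2 (a : ℕ → ℚ) : PowerSeries.coeff (R := ℚ) 2 (expNegD a) = -a 0 := by
  simp only [expNegD, PowerSeries.coeff_mk]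
  rw [Finset.sum_range_succ, Finset.sum_range_succ, Finset.sum_range_one]
  simp [Function.iterate_succ, Function.iterate_zero, c2, d2, PowerSeries.coeff_X]

lemma exp3 (a : ℕ → ℚ) : PowerSeries.coeff (R := ℚ) 3 (expNegD a) = -a 1 + a 0 ^ 2 := by
  simp only [expNegD, PowerSeries.coeff_mk]
  rw [Finset.sum_range_succ, Finset.sum_range_succ, Finset.sum_range_succ, Finset.sum_range_one]
  simp [Function.iterate_succ, Function.iterate_zero, c3, d3, e3, PowerSeries.coeff_X]

lemma coeff_rhs (k n : ℕ) (hn : 0 < n) :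
    PowerSeries.coeff (R := ℚ) n (PowerSeries.C (R := ℚ) (1 / k) * ((1 + PowerSeries.X) ^ k - 1)) =
    (1 / k) * (k.choose n) := by
  rw [PowerSeries.coeff_C_mul, map_sub]
  have : ((1 : ℚ⟦X⟧) + PowerSeries.X) = ((1 + Polynomial.X : Polynomial ℚ) : ℚ⟦X⟧) := by
    simp
  rw [this, ← Polynomial.coe_pow, Polynomial.coeff_coe, Polynomial.coeff_one_add_X_pow]
  simp [PowerSeries.coeff_one, Nat.pos_iff_ne_zero.mp hn]

lemma choose3 (k : ℕ) : (k.choose 3 : ℚ) = k * (k - 1) * (k - 2) / 6 := by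
  induction k with
  | zero => simp
  | succ n ih =>
    rw [Nat.choose_succ_succ]
    push_cast [ih, Nat.cast_choose_two]
    ring


/-- if `(a_j)_{j≥1}` (encoded as `a : ℕ → ℚ` with `a i = a_{i+1}`) satisfies
`exp(−Σ_{j≥1} a_j x^{j+1} d/dx) · x = ((1+x)^k − 1)/k` in `ℚ[[x]]`, then
`a_1 = (1−k)/2` and `a_2 = (k²−1)/12`. -/
theorem stmt3 (k : ℕ) (hk : 0 < k) (a : ℕ → ℚ)
    (ha : expNegD a = PowerSeries.C (R := ℚ) (1 / k) * ((1 + PowerSeries.X) ^ k - 1)) :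
    a 0 = (1 - (k : ℚ)) / 2 ∧ a 1 = ((k : ℚ) ^ 2 - 1) / 12 := by
  have hk' : (k : ℚ) ≠ 0 := Nat.cast_ne_zero.mpr hk.ne'
  have h2 := congrArg (PowerSeries.coeff (R := ℚ) 2) ha
  have h3 := congrArg (PowerSeries.coeff (R := ℚ) 3) ha
  rw [exp2, coeff_rhs k 2 (by norm_num), Nat.cast_choose_two] at h2
  rw [exp3, coeff_rhs k 3 (by norm_num), choose3] at h3
  have hr2 : (1 / (k:ℚ)) * ((k:ℚ) * ((k:ℚ) - 1) / 2) = ((k:ℚ) - 1) / 2 := by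
    field_simp
  have hr3 : (1 / (k:ℚ)) * ((k:ℚ) * ((k:ℚ) - 1) * ((k:ℚ) - 2) / 6)
      = ((k:ℚ) - 1) * ((k:ℚ) - 2) / 6 := by
    field_simp
  rw [hr2] at h2
  rw [hr3] at h3
  have ha0 : a 0 = (1 - (k : ℚ)) / 2 := by linarith
  refine ⟨ha0, ?_⟩
  rw [ha0] at h3
  linear_combination -h3
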